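/- Max-reward stage cumulative bound (Lemma A.2): in a finite discounted MDP, let δ > 0, let R : S → A → ℝ be a reward signal, and let π_0, π_1, …, π_{n} be policies such that for every i < n: (π_i s a = 0 → π_{i+1} s a = 0), D̄_KL(π_{i+1}‖π_i) ≤ δ, and 𝔸_R(π_i, π_{i+1}) ≥ 0. Then J_R(π_n) − J_R(π_0) ≥ − (√(2δ) · γ / (1−γ)²) · ∑_{j=1}^{n} ε_R(π_{j−1}, π_j). -/

import Mathlib

open Real BigOperators

/-- Induced transition matrix of policy `pol`: `P_pol(s,s') = ∑ a, pol s a * P s a s'`. -/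
noncomputable def transMat {S A : Type*} [Fintype A] (P : S → A → S → ℝ)
    (pol : S → A → ℝ) : Matrix S S ℝ :=
  fun s s' => ∑ a, pol s a * P s a s'

/-- Discounted state visitation distribution
`d_pol(s) = (1-γ) ∑ₜ γ^t ∑_{s0} ρ0 s0 * (P_pol^t)(s0,s)`. -/
noncomputable def dVisit {S A : Type*} [Fintype S] [DecidableEq S] [Fintype A]
    (P : S → A → S → ℝ) (γ : ℝ) (ρ0 : S → ℝ) (pol : S → A → ℝ) (s : S) : ℝ :=
  (1 - γ) * ∑' t : ℕ, γ ^ t * ∑ s0, ρ0 s0 * (transMat P pol ^ t) s0 s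

/-- Value function of signal `F` under policy `pol`. -/
noncomputable def Vfun {S A : Type*} [Fintype S] [DecidableEq S] [Fintype A]
    (P : S → A → S → ℝ) (γ : ℝ) (F : S → A → ℝ) (pol : S → A → ℝ) (s : S) : ℝ :=
  ∑' t : ℕ, γ ^ t * ∑ s', (transMat P pol ^ t) s s' * ∑ a, pol s' a * F s' a

/-- Return `J_F(pol) = ∑ s, ρ0 s * V_F^pol(s)`. -/
noncomputable def Jret {S A : Type*} [Fintype S] [DecidableEq S] [Fintype A]
    (P : S → A → S → ℝ) (γ : ℝ) (ρ0 : S → ℝ) (F : S → A → ℝ) (pol : S → A → ℝ) : ℝ :=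
  ∑ s, ρ0 s * Vfun P γ F pol s

/-- Action-value function `Q_F^pol(s,a) = F s a + γ ∑_{s'} P s a s' * V_F^pol(s')`. -/
noncomputable def Qfun {S A : Type*} [Fintype S] [DecidableEq S] [Fintype A]
    (P : S → A → S → ℝ) (γ : ℝ) (F : S → A → ℝ) (pol : S → A → ℝ) (s : S) (a : A) : ℝ :=
  F s a + γ * ∑ s', P s a s' * Vfun P γ F pol s'

/-- Advantage function `A_F^pol(s,a) = Q_F^pol(s,a) - V_F^pol(s)`. -/
noncomputable def Adv {S A : Type*} [Fintype S] [DecidableEq S] [Fintype A]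
    (P : S → A → S → ℝ) (γ : ℝ) (F : S → A → ℝ) (pol : S → A → ℝ) (s : S) (a : A) : ℝ :=
  Qfun P γ F pol s a - Vfun P γ F pol s

/-- Expected surrogate advantage
`𝔸_F(pol,pol') = ∑ s, d_pol(s) ∑ a, pol' s a * A_F^pol(s,a)`. -/
noncomputable def surrAdv {S A : Type*} [Fintype S] [DecidableEq S] [Fintype A]
    (P : S → A → S → ℝ) (γ : ℝ) (ρ0 : S → ℝ) (F : S → A → ℝ)
    (pol pol' : S → A → ℝ) : ℝ :=
  ∑ s, dVisit P γ ρ0 pol s * ∑ a, pol' s a * Adv P γ F pol s a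

/-- `ε_F(pol,pol') = max_s |∑ a, pol' s a * A_F^pol(s,a)|`. -/
noncomputable def epsAdv {S A : Type*} [Fintype S] [DecidableEq S] [Fintype A] [Nonempty S]
    (P : S → A → S → ℝ) (γ : ℝ) (F : S → A → ℝ) (pol pol' : S → A → ℝ) : ℝ :=
  Finset.univ.sup' Finset.univ_nonempty fun s => |∑ a, pol' s a * Adv P γ F pol s a|

/-- Per-state KL divergence `KL(pol'‖pol)(s) = ∑ a, pol' s a * log (pol' s a / pol s a)`
(with the convention `0 * log 0 = 0`, automatic since `Real.log 0 = 0`). -/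
noncomputable def klState {S A : Type*} [Fintype A] (pol' pol : S → A → ℝ) (s : S) : ℝ :=
  ∑ a, pol' s a * Real.log (pol' s a / pol s a)

/-- Averaged KL divergence `D̄_KL(pol'‖pol) = ∑ s, d_pol(s) * KL(pol'‖pol)(s)`. -/
noncomputable def avgKL {S A : Type*} [Fintype S] [DecidableEq S] [Fintype A]
    (P : S → A → S → ℝ) (γ : ℝ) (ρ0 : S → ℝ) (pol' pol : S → A → ℝ) : ℝ :=
  ∑ s, dVisit P γ ρ0 pol s * klState pol' pol s



set_option linter.unusedSectionVars false
set_option linter.unusedVariables false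


noncomputable def Gaux (t : ℝ) : ℝ := t * Real.log t - t + 1 - 3*(t-1)^2/(2*(t+2))
noncomputable def Daux (t : ℝ) : ℝ := Real.log t - 3*((t-1)*(t+5))/(2*(t+2)^2)

lemma hasDerivAt_Gaux {t : ℝ} (ht : 0 < t) : HasDerivAt Gaux (Daux t) t := by
  have h2 : (2:ℝ)*(t+2) ≠ 0 := by nlinarith
  have h1 : HasDerivAt (fun x : ℝ => x * Real.log x - x + 1) (Real.log t) t := by
    have := ((hasDerivAt_id t).mul (Real.hasDerivAt_log ht.ne')).sub_const (0:ℝ)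
    have h := (((hasDerivAt_id t).mul (Real.hasDerivAt_log ht.ne')).sub (hasDerivAt_id t)).add_const (1:ℝ)
    refine h.congr_deriv ?_
    field_simp
    simp
  have hq : HasDerivAt (fun x : ℝ => 3*(x-1)^2/(2*(x+2)))
      (3*((t-1)*(t+5))/(2*(t+2)^2)) t := by
    have hn : HasDerivAt (fun x : ℝ => 3*(x-1)^2) (6*(t-1)) t := by
      have := (((hasDerivAt_id t).sub_const (1:ℝ)).pow 2).const_mul (3:ℝ)
      refine this.congr_deriv ?_; simp [id_eq]; ring
    have hd : HasDerivAt (fun x : ℝ => 2*(x+2)) (2:ℝ) t := by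
      have := ((hasDerivAt_id t).add_const (2:ℝ)).const_mul (2:ℝ)
      refine this.congr_deriv ?_; ring
    have := hn.div hd h2
    refine this.congr_deriv ?_
    field_simp
    ring
  have := h1.sub hq
  exact this

lemma hasDerivAt_Daux {t : ℝ} (ht : 0 < t) : HasDerivAt Daux (1/t - 27/(t+2)^3) t := by
  have h2 : (2:ℝ)*(t+2)^2 ≠ 0 := by positivity
  have ht2 : t + 2 ≠ 0 := by linarith
  have h1 : HasDerivAt Real.log (1/t) t := by
    simpa [one_div] using Real.hasDerivAt_log ht.ne'
  have hn : HasDerivAt (fun x : ℝ => 3*((x-1)*(x+5))) (3*(2*t+4)) t := by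
    have := (((hasDerivAt_id t).sub_const (1:ℝ)).mul ((hasDerivAt_id t).add_const (5:ℝ))).const_mul (3:ℝ)
    refine this.congr_deriv ?_; simp [id_eq]; ring
  have hd : HasDerivAt (fun x : ℝ => 2*(x+2)^2) (4*(t+2)) t := by
    have := (((hasDerivAt_id t).add_const (2:ℝ)).pow 2).const_mul (2:ℝ)
    refine this.congr_deriv ?_; simp [id_eq]; ring
  have hq := hn.div hd h2
  have := h1.sub hq
  refine this.congr_deriv ?_
  field_simp
  ring

lemma Daux_deriv_nonneg {t : ℝ} (ht : 0 < t) : 0 ≤ 1/t - 27/(t+2)^3 := by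
  rw [sub_nonneg, div_le_div_iff₀ (by positivity) ht]
  nlinarith [sq_nonneg (t-1), ht.le]

lemma Daux_one : Daux 1 = 0 := by simp [Daux]

lemma Gaux_one : Gaux 1 = 0 := by norm_num [Gaux]

lemma Daux_nonneg {t : ℝ} (ht : 1 ≤ t) : 0 ≤ Daux t := by
  have hmono : MonotoneOn Daux (Set.Icc 1 t) := by
    apply monotoneOn_of_deriv_nonneg (convex_Icc 1 t)
    · intro x hx
      exact (hasDerivAt_Daux (lt_of_lt_of_le one_pos hx.1)).continuousAt.continuousWithinAt
    · intro x hx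
      rw [interior_Icc] at hx
      exact (hasDerivAt_Daux (by linarith [hx.1])).differentiableAt.differentiableWithinAt
    · intro x hx
      rw [interior_Icc] at hx
      rw [(hasDerivAt_Daux (by linarith [hx.1])).deriv]
      exact Daux_deriv_nonneg (by linarith [hx.1])
  have := hmono (Set.left_mem_Icc.2 ht) (Set.right_mem_Icc.2 ht) ht
  rwa [Daux_one] at this

lemma Daux_nonpos {t : ℝ} (ht : 0 < t) (ht1 : t ≤ 1) : Daux t ≤ 0 := by
  have hmono : MonotoneOn Daux (Set.Icc t 1) := by
    apply monotoneOn_of_deriv_nonneg (convex_Icc t 1)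
    · intro x hx
      exact (hasDerivAt_Daux (lt_of_lt_of_le ht hx.1)).continuousAt.continuousWithinAt
    · intro x hx
      rw [interior_Icc] at hx
      exact (hasDerivAt_Daux (lt_trans ht hx.1)).differentiableAt.differentiableWithinAt
    · intro x hx
      rw [interior_Icc] at hx
      rw [(hasDerivAt_Daux (lt_trans ht hx.1)).deriv]
      exact Daux_deriv_nonneg (lt_trans ht hx.1)
  have := hmono (Set.left_mem_Icc.2 ht1) (Set.right_mem_Icc.2 ht1) ht1
  rwa [Daux_one] at this

lemma Gaux_nonneg {t : ℝ} (ht : 0 < t) : 0 ≤ Gaux t := by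
  rcases le_or_gt 1 t with h1 | h1
  · have hmono : MonotoneOn Gaux (Set.Icc 1 t) := by
      apply monotoneOn_of_deriv_nonneg (convex_Icc 1 t)
      · intro x hx
        exact (hasDerivAt_Gaux (lt_of_lt_of_le one_pos hx.1)).continuousAt.continuousWithinAt
      · intro x hx
        rw [interior_Icc] at hx
        exact (hasDerivAt_Gaux (by linarith [hx.1])).differentiableAt.differentiableWithinAt
      · intro x hx
        rw [interior_Icc] at hx
        rw [(hasDerivAt_Gaux (by linarith [hx.1])).deriv]
        exact Daux_nonneg hx.1.le
    have := hmono (Set.left_mem_Icc.2 h1) (Set.right_mem_Icc.2 h1) h1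
    rwa [Gaux_one] at this
  · have hanti : AntitoneOn Gaux (Set.Icc t 1) := by
      apply antitoneOn_of_deriv_nonpos (convex_Icc t 1)
      · intro x hx
        exact (hasDerivAt_Gaux (lt_of_lt_of_le ht hx.1)).continuousAt.continuousWithinAt
      · intro x hx
        rw [interior_Icc] at hx
        exact (hasDerivAt_Gaux (lt_trans ht hx.1)).differentiableAt.differentiableWithinAt
      · intro x hx
        rw [interior_Icc] at hx
        rw [(hasDerivAt_Gaux (lt_trans ht hx.1)).deriv]
        exact Daux_nonpos (lt_trans ht hx.1) hx.2.le
    have := hanti (Set.left_mem_Icc.2 h1.le) (Set.right_mem_Icc.2 h1.le) h1.le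
    rwa [Gaux_one] at this

lemma gkey {t : ℝ} (ht : 0 < t) : 3*(t-1)^2/(2*(t+2)) ≤ t * Real.log t - t + 1 := by
  have := Gaux_nonneg ht
  unfold Gaux at this
  linarith



lemma klPointwise {x y : ℝ} (hx : 0 ≤ x) (hy : 0 ≤ y) (h0 : y = 0 → x = 0) :
    3*(x-y)^2/(2*(x+2*y)) ≤ x * Real.log (x/y) - x + y := by
  rcases eq_or_lt_of_le hy with hy0 | hy0
  · have hx0 := h0 hy0.symm
    simp [← hy0, hx0]
  · rcases eq_or_lt_of_le hx with hx0 | hx0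
    · rw [← hx0]
      have h4 : (2:ℝ)*(0+2*y) ≠ 0 := by positivity
      have e : 3*((0:ℝ)-y)^2/(2*(0+2*y)) = 3*y/4 := by field_simp; ring
      rw [e]
      simp only [zero_mul, zero_sub, neg_zero, zero_add, zero_div]
      linarith
    · have ht : 0 < x/y := div_pos hx0 hy0
      have hk := gkey ht
      have hyne : y ≠ 0 := hy0.ne'
      have h1 : x + 2*y ≠ 0 := by positivity
      have h2 : x/y + 2 ≠ 0 := by positivity
      have e1 : 3*(x-y)^2/(2*(x+2*y)) = y * (3*(x/y-1)^2/(2*(x/y+2))) := by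
        field_simp
      have e2 : x * Real.log (x/y) - x + y = y * ((x/y) * Real.log (x/y) - x/y + 1) := by
        field_simp
      rw [e1, e2]
      exact mul_le_mul_of_nonneg_left hk hy0.le

section Pinsker
variable {A : Type*} [Fintype A] (p q : A → ℝ)

lemma kl_ge_chi (hp0 : ∀ a, 0 ≤ p a) (hq0 : ∀ a, 0 ≤ q a)
    (hp1 : ∑ a, p a = 1) (hq1 : ∑ a, q a = 1) (habs : ∀ a, q a = 0 → p a = 0) :
    (3/2) * ∑ a, (p a - q a)^2 / (p a + 2*q a) ≤ ∑ a, p a * Real.log (p a / q a) := by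
  have h2 : ∑ a, 3*(p a - q a)^2/(2*(p a + 2*q a)) ≤
      ∑ a, (p a * Real.log (p a / q a) - p a + q a) :=
    Finset.sum_le_sum fun a _ => klPointwise (hp0 a) (hq0 a) (habs a)
  have e1 : ∑ a, 3*(p a - q a)^2/(2*(p a + 2*q a)) =
      (3/2) * ∑ a, (p a - q a)^2 / (p a + 2*q a) := by
    rw [Finset.mul_sum]
    refine Finset.sum_congr rfl fun a _ => ?_
    rcases eq_or_ne (p a + 2*q a) 0 with h | h
    · simp [h]
    · field_simp
  have e2 : ∑ a, (p a * Real.log (p a / q a) - p a + q a) =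
      ∑ a, p a * Real.log (p a / q a) := by
    rw [Finset.sum_add_distrib, Finset.sum_sub_distrib, hp1, hq1]
    ring
  rw [e1, e2] at h2
  exact h2

lemma chi_nonneg (hp0 : ∀ a, 0 ≤ p a) (hq0 : ∀ a, 0 ≤ q a) :
    0 ≤ ∑ a, (p a - q a)^2 / (p a + 2*q a) :=
  Finset.sum_nonneg fun a _ =>
    div_nonneg (sq_nonneg _) (by have := hp0 a; have := hq0 a; linarith)

lemma kl_nonneg' (hp0 : ∀ a, 0 ≤ p a) (hq0 : ∀ a, 0 ≤ q a)
    (hp1 : ∑ a, p a = 1) (hq1 : ∑ a, q a = 1) (habs : ∀ a, q a = 0 → p a = 0) :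
    0 ≤ ∑ a, p a * Real.log (p a / q a) := by
  have := kl_ge_chi p q hp0 hq0 hp1 hq1 habs
  have h2 : (0:ℝ) ≤ (3/2) * ∑ a, (p a - q a)^2 / (p a + 2*q a) := by
    have := chi_nonneg p q hp0 hq0
    linarith
  linarith

lemma pinsker_finset' (hp0 : ∀ a, 0 ≤ p a) (hq0 : ∀ a, 0 ≤ q a)
    (hp1 : ∑ a, p a = 1) (hq1 : ∑ a, q a = 1) (habs : ∀ a, q a = 0 → p a = 0) :
    ∑ a, |p a - q a| ≤ Real.sqrt (2 * ∑ a, p a * Real.log (p a / q a)) := by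
  set SS := ∑ a, (p a - q a)^2 / (p a + 2*q a) with hSS
  have hcs : (∑ a, |p a - q a|)^2 ≤ 3 * SS := by
    have key : ∀ a : A, |p a - q a| =
        Real.sqrt (p a + 2*q a) * (|p a - q a| / Real.sqrt (p a + 2*q a)) := by
      intro a
      rcases eq_or_lt_of_le (by have := hp0 a; have := hq0 a; linarith : (0:ℝ) ≤ p a + 2*q a) with h | h
      · have hp : p a = 0 := by nlinarith [hp0 a, hq0 a]
        have hq : q a = 0 := by nlinarith [hp0 a, hq0 a]
        simp [hp, hq]
      · have hs : Real.sqrt (p a + 2*q a) ≠ 0 := by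
          exact (Real.sqrt_pos.2 h).ne'
        exact (mul_div_cancel₀ _ hs).symm
    have cs := Finset.sum_mul_sq_le_sq_mul_sq Finset.univ
      (fun a => Real.sqrt (p a + 2*q a)) (fun a => |p a - q a| / Real.sqrt (p a + 2*q a))
    have e0 : ∑ a, Real.sqrt (p a + 2*q a) * (|p a - q a| / Real.sqrt (p a + 2*q a)) =
        ∑ a, |p a - q a| := Finset.sum_congr rfl fun a _ => (key a).symm
    have e1 : ∑ a, (Real.sqrt (p a + 2*q a))^2 = 3 := by
      have : ∀ a : A, (Real.sqrt (p a + 2*q a))^2 = p a + 2*q a := by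
        intro a
        exact Real.sq_sqrt (by have := hp0 a; have := hq0 a; linarith)
      rw [Finset.sum_congr rfl fun a _ => this a, Finset.sum_add_distrib, hp1]
      rw [← Finset.mul_sum, hq1]
      norm_num
    have e2 : ∑ a, (|p a - q a| / Real.sqrt (p a + 2*q a))^2 = SS := by
      refine Finset.sum_congr rfl fun a _ => ?_
      rw [div_pow, sq_abs, Real.sq_sqrt (by have := hp0 a; have := hq0 a; linarith)]
    rw [e0, e1, e2] at cs
    exact cs
  have hkl := kl_ge_chi p q hp0 hq0 hp1 hq1 habs
  have habs2 : (∑ a, |p a - q a|)^2 ≤ 2 * ∑ a, p a * Real.log (p a / q a) := by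
    linarith
  have hnn : 0 ≤ ∑ a, |p a - q a| := Finset.sum_nonneg fun a _ => abs_nonneg _
  calc ∑ a, |p a - q a| = Real.sqrt ((∑ a, |p a - q a|)^2) := (Real.sqrt_sq hnn).symm
    _ ≤ Real.sqrt (2 * ∑ a, p a * Real.log (p a / q a)) := Real.sqrt_le_sqrt habs2

end Pinsker


section MDPcore
variable {S : Type*} [Fintype S] [DecidableEq S]

def isStoch (Q : Matrix S S ℝ) : Prop :=
  (∀ s s', 0 ≤ Q s s') ∧ (∀ s, ∑ s', Q s s' = 1)

lemma isStoch.pow {Q : Matrix S S ℝ} (h : isStoch Q) (t : ℕ) : isStoch (Q ^ t) := by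
  induction t with
  | zero =>
    refine ⟨fun s s' => ?_, fun s => ?_⟩
    · rw [pow_zero, Matrix.one_apply]
      split <;> norm_num
    · rw [pow_zero]
      simp [Matrix.one_apply]
  | succ t ih =>
    rw [pow_succ]
    refine ⟨fun s s' => ?_, fun s => ?_⟩
    · rw [Matrix.mul_apply]
      exact Finset.sum_nonneg fun u _ => mul_nonneg (ih.1 s u) (h.1 u s')
    · simp only [Matrix.mul_apply]
      rw [Finset.sum_comm]
      calc ∑ u, ∑ s', (Q ^ t) s u * Q u s' = ∑ u, (Q ^ t) s u * ∑ s', Q u s' := by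
            simp [Finset.mul_sum]
        _ = 1 := by
            simp only [h.2, mul_one]
            exact ih.2 s

lemma isStoch.entry_le_one {Q : Matrix S S ℝ} (h : isStoch Q) (s s' : S) : Q s s' ≤ 1 := by
  rw [← h.2 s]
  exact Finset.single_le_sum (fun u _ => h.1 s u) (Finset.mem_univ s')

noncomputable def Mmat (γ : ℝ) (Q : Matrix S S ℝ) : Matrix S S ℝ :=
  fun s s' => ∑' t : ℕ, γ ^ t * (Q ^ t) s s'

variable {γ : ℝ} {Q : Matrix S S ℝ}

lemma Mmat_summable (hγ0 : 0 < γ) (hγ1 : γ < 1) (hQ : isStoch Q) (s s' : S) :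
    Summable (fun t : ℕ => γ ^ t * (Q ^ t) s s') := by
  refine Summable.of_nonneg_of_le
    (fun t => mul_nonneg (pow_nonneg hγ0.le t) ((hQ.pow t).1 s s'))
    (fun t => ?_) (summable_geometric_of_lt_one hγ0.le hγ1)
  calc γ ^ t * (Q ^ t) s s' ≤ γ ^ t * 1 :=
        mul_le_mul_of_nonneg_left ((hQ.pow t).entry_le_one s s') (pow_nonneg hγ0.le t)
    _ = γ ^ t := mul_one _

lemma Mmat_nonneg (hγ0 : 0 < γ) (hγ1 : γ < 1) (hQ : isStoch Q) (s s' : S) :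
    0 ≤ Mmat γ Q s s' :=
  tsum_nonneg fun t => mul_nonneg (pow_nonneg hγ0.le t) ((hQ.pow t).1 s s')

lemma Mmat_rowsum (hγ0 : 0 < γ) (hγ1 : γ < 1) (hQ : isStoch Q) (s : S) :
    ∑ s', Mmat γ Q s s' = (1 - γ)⁻¹ := by
  unfold Mmat
  rw [← Summable.tsum_finsetSum (fun s' _ => Mmat_summable hγ0 hγ1 hQ s s')]
  calc ∑' t : ℕ, ∑ s', γ ^ t * (Q ^ t) s s'
      = ∑' t : ℕ, γ ^ t := by
        refine tsum_congr fun t => ?_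
        rw [← Finset.mul_sum, (hQ.pow t).2 s, mul_one]
    _ = (1 - γ)⁻¹ := tsum_geometric_of_lt_one hγ0.le hγ1

lemma Mmat_bellman_left (hγ0 : 0 < γ) (hγ1 : γ < 1) (hQ : isStoch Q) (s s' : S) :
    Mmat γ Q s s' = (if s = s' then 1 else 0) + γ * ∑ u, Q s u * Mmat γ Q u s' := by
  have h0 := Summable.tsum_eq_zero_add (Mmat_summable hγ0 hγ1 hQ s s')
  unfold Mmat
  rw [h0]
  congr 1
  · simp [Matrix.one_apply]
  · calc ∑' t : ℕ, γ ^ (t + 1) * (Q ^ (t + 1)) s s'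
        = ∑' t : ℕ, ∑ u, γ * Q s u * (γ ^ t * (Q ^ t) u s') := by
          refine tsum_congr fun t => ?_
          rw [pow_succ' Q t, Matrix.mul_apply, Finset.mul_sum]
          exact Finset.sum_congr rfl fun u _ => by ring
      _ = ∑ u, γ * Q s u * Mmat γ Q u s' := by
          rw [Summable.tsum_finsetSum (fun u _ => (Mmat_summable hγ0 hγ1 hQ u s').mul_left (γ * Q s u))]
          refine Finset.sum_congr rfl fun u _ => ?_
          rw [tsum_mul_left]
          rfl
      _ = γ * ∑ u, Q s u * Mmat γ Q u s' := by
          rw [Finset.mul_sum]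
          exact Finset.sum_congr rfl fun u _ => by ring

lemma Mmat_bellman_right (hγ0 : 0 < γ) (hγ1 : γ < 1) (hQ : isStoch Q) (s s' : S) :
    Mmat γ Q s s' = (if s = s' then 1 else 0) + γ * ∑ u, Mmat γ Q s u * Q u s' := by
  have h0 := Summable.tsum_eq_zero_add (Mmat_summable hγ0 hγ1 hQ s s')
  unfold Mmat
  rw [h0]
  congr 1
  · simp [Matrix.one_apply]
  · calc ∑' t : ℕ, γ ^ (t + 1) * (Q ^ (t + 1)) s s'
        = ∑' t : ℕ, ∑ u, γ * Q u s' * (γ ^ t * (Q ^ t) s u) := by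
          refine tsum_congr fun t => ?_
          rw [pow_succ Q t, Matrix.mul_apply, Finset.mul_sum]
          exact Finset.sum_congr rfl fun u _ => by ring
      _ = ∑ u, γ * Q u s' * Mmat γ Q s u := by
          rw [Summable.tsum_finsetSum (fun u _ => (Mmat_summable hγ0 hγ1 hQ s u).mul_left (γ * Q u s'))]
          refine Finset.sum_congr rfl fun u _ => ?_
          rw [tsum_mul_left]
          rfl
      _ = γ * ∑ u, Mmat γ Q s u * Q u s' := by
          rw [Finset.mul_sum]
          exact Finset.sum_congr rfl fun u _ => by ring

lemma Mmat_sub (hγ0 : 0 < γ) (hγ1 : γ < 1) {Q' : Matrix S S ℝ}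
    (hQ : isStoch Q) (hQ' : isStoch Q') (s s' : S) :
    Mmat γ Q' s s' - Mmat γ Q s s' =
      ∑ v, ∑ w, Mmat γ Q s v * (γ * (Q' v w - Q v w)) * Mmat γ Q' w s' := by
  have hL' : ∀ v, γ * ∑ w, Q' v w * Mmat γ Q' w s' =
      Mmat γ Q' v s' - (if v = s' then 1 else 0) := by
    intro v
    rw [Mmat_bellman_left hγ0 hγ1 hQ' v s']
    ring
  have hR : ∀ w, γ * ∑ v, Mmat γ Q s v * Q v w =
      Mmat γ Q s w - (if s = w then 1 else 0) := by
    intro w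
    rw [Mmat_bellman_right hγ0 hγ1 hQ s w]
    ring
  set M := Mmat γ Q with hM
  set M' := Mmat γ Q' with hM'
  have step1 : ∑ v, ∑ w, M s v * (γ * (Q' v w - Q v w)) * M' w s' =
      (∑ v, M s v * (γ * ∑ w, Q' v w * M' w s')) -
      ∑ w, (γ * ∑ v, M s v * Q v w) * M' w s' := by
    have e : ∀ v w, M s v * (γ * (Q' v w - Q v w)) * M' w s' =
        M s v * (γ * (Q' v w * M' w s')) - γ * (M s v * Q v w) * M' w s' := by
      intro v w; ring
    simp only [e, Finset.sum_sub_distrib]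
    congr 1
    · refine Finset.sum_congr rfl fun v _ => ?_
      rw [Finset.mul_sum, Finset.mul_sum]
    · rw [Finset.sum_comm]
      refine Finset.sum_congr rfl fun w _ => ?_
      rw [Finset.mul_sum, Finset.sum_mul]
  have d1 : ∑ v, M s v * (if v = s' then 1 else 0) = M s s' := by
    simp [mul_ite]
  have d2 : ∑ w, (if s = w then 1 else 0) * M' w s' = M' s s' := by
    simp [ite_mul]
  rw [step1]
  simp only [hL', hR, mul_sub, sub_mul, Finset.sum_sub_distrib]
  rw [d1, d2]
  ring

end MDPcore

section Glue
variable {S A : Type*} [Fintype S] [DecidableEq S] [Fintype A]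
variable {P : S → A → S → ℝ} {γ : ℝ} {ρ0 : S → ℝ}

lemma transMat_stoch (hP0 : ∀ s a s', 0 ≤ P s a s') (hP1 : ∀ s a, ∑ s', P s a s' = 1)
    {pol : S → A → ℝ} (h0 : ∀ s a, 0 ≤ pol s a) (h1 : ∀ s, ∑ a, pol s a = 1) :
    isStoch (transMat P pol) := by
  constructor
  · intro s s'
    exact Finset.sum_nonneg fun a _ => mul_nonneg (h0 s a) (hP0 s a s')
  · intro s
    simp only [transMat]
    rw [Finset.sum_comm]
    calc ∑ a, ∑ s', pol s a * P s a s' = ∑ a, pol s a * ∑ s', P s a s' := by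
          simp [Finset.mul_sum]
      _ = 1 := by
          simp only [hP1, mul_one]
          exact h1 s

lemma Vfun_eq (hγ0 : 0 < γ) (hγ1 : γ < 1)
    (hP0 : ∀ s a s', 0 ≤ P s a s') (hP1 : ∀ s a, ∑ s', P s a s' = 1)
    {pol : S → A → ℝ} (h0 : ∀ s a, 0 ≤ pol s a) (h1 : ∀ s, ∑ a, pol s a = 1)
    (F : S → A → ℝ) (s : S) :
    Vfun P γ F pol s = ∑ s', Mmat γ (transMat P pol) s s' * ∑ a, pol s' a * F s' a := by
  have hQ := transMat_stoch hP0 hP1 h0 h1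
  unfold Vfun
  calc ∑' t : ℕ, γ ^ t * ∑ s', (transMat P pol ^ t) s s' * ∑ a, pol s' a * F s' a
      = ∑' t : ℕ, ∑ s', (γ ^ t * (transMat P pol ^ t) s s') * ∑ a, pol s' a * F s' a := by
        refine tsum_congr fun t => ?_
        rw [Finset.mul_sum]
        exact Finset.sum_congr rfl fun s' _ => by ring
    _ = ∑ s', ∑' t : ℕ, (γ ^ t * (transMat P pol ^ t) s s') * ∑ a, pol s' a * F s' a :=
        Summable.tsum_finsetSum fun s' _ => (Mmat_summable hγ0 hγ1 hQ s s').mul_right _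
    _ = ∑ s', Mmat γ (transMat P pol) s s' * ∑ a, pol s' a * F s' a := by
        refine Finset.sum_congr rfl fun s' _ => ?_
        rw [tsum_mul_right]
        rfl

lemma dVisit_eq (hγ0 : 0 < γ) (hγ1 : γ < 1)
    (hP0 : ∀ s a s', 0 ≤ P s a s') (hP1 : ∀ s a, ∑ s', P s a s' = 1)
    {pol : S → A → ℝ} (h0 : ∀ s a, 0 ≤ pol s a) (h1 : ∀ s, ∑ a, pol s a = 1)
    (s : S) :
    dVisit P γ ρ0 pol s = (1 - γ) * ∑ s0, ρ0 s0 * Mmat γ (transMat P pol) s0 s := by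
  have hQ := transMat_stoch hP0 hP1 h0 h1
  unfold dVisit
  congr 1
  calc ∑' t : ℕ, γ ^ t * ∑ s0, ρ0 s0 * (transMat P pol ^ t) s0 s
      = ∑' t : ℕ, ∑ s0, ρ0 s0 * (γ ^ t * (transMat P pol ^ t) s0 s) := by
        refine tsum_congr fun t => ?_
        rw [Finset.mul_sum]
        exact Finset.sum_congr rfl fun s0 _ => by ring
    _ = ∑ s0, ∑' t : ℕ, ρ0 s0 * (γ ^ t * (transMat P pol ^ t) s0 s) :=
        Summable.tsum_finsetSum fun s0 _ => (Mmat_summable hγ0 hγ1 hQ s0 s).mul_left _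
    _ = ∑ s0, ρ0 s0 * Mmat γ (transMat P pol) s0 s := by
        refine Finset.sum_congr rfl fun s0 _ => ?_
        rw [tsum_mul_left]
        rfl

lemma dVisit_nonneg (hγ0 : 0 < γ) (hγ1 : γ < 1)
    (hP0 : ∀ s a s', 0 ≤ P s a s') (hP1 : ∀ s a, ∑ s', P s a s' = 1)
    (hρ0 : ∀ s, 0 ≤ ρ0 s)
    {pol : S → A → ℝ} (h0 : ∀ s a, 0 ≤ pol s a) (h1 : ∀ s, ∑ a, pol s a = 1)
    (s : S) : 0 ≤ dVisit P γ ρ0 pol s := by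
  rw [dVisit_eq hγ0 hγ1 hP0 hP1 h0 h1 s]
  have hQ := transMat_stoch hP0 hP1 h0 h1
  exact mul_nonneg (by linarith) (Finset.sum_nonneg fun s0 _ =>
    mul_nonneg (hρ0 s0) (Mmat_nonneg hγ0 hγ1 hQ s0 s))

lemma dVisit_sum_one (hγ0 : 0 < γ) (hγ1 : γ < 1)
    (hP0 : ∀ s a s', 0 ≤ P s a s') (hP1 : ∀ s a, ∑ s', P s a s' = 1)
    (hρ1 : ∑ s, ρ0 s = 1)
    {pol : S → A → ℝ} (h0 : ∀ s a, 0 ≤ pol s a) (h1 : ∀ s, ∑ a, pol s a = 1) :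
    ∑ s, dVisit P γ ρ0 pol s = 1 := by
  have hQ := transMat_stoch hP0 hP1 h0 h1
  have hne : (1 : ℝ) - γ ≠ 0 := by linarith
  calc ∑ s, dVisit P γ ρ0 pol s
      = (1 - γ) * ∑ s, ∑ s0, ρ0 s0 * Mmat γ (transMat P pol) s0 s := by
        rw [Finset.mul_sum]
        exact Finset.sum_congr rfl fun s _ => dVisit_eq hγ0 hγ1 hP0 hP1 h0 h1 s
    _ = (1 - γ) * ∑ s0, ρ0 s0 * ∑ s, Mmat γ (transMat P pol) s0 s := by
        rw [Finset.sum_comm]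
        congr 1
        exact Finset.sum_congr rfl fun s0 _ => by rw [Finset.mul_sum]
    _ = 1 := by
        simp only [Mmat_rowsum hγ0 hγ1 hQ]
        rw [← Finset.sum_mul, hρ1, one_mul]
        field_simp

lemma sumAdv_eq {pol pol' : S → A → ℝ} (h1' : ∀ s, ∑ a, pol' s a = 1)
    (R : S → A → ℝ) (s : S) :
    ∑ a, pol' s a * Adv P γ R pol s a =
      (∑ a, pol' s a * R s a)
        + γ * ∑ s', transMat P pol' s s' * Vfun P γ R pol s'
        - Vfun P γ R pol s := by
  have key : ∑ a, pol' s a * (γ * ∑ s', P s a s' * Vfun P γ R pol s')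
      = γ * ∑ s', transMat P pol' s s' * Vfun P γ R pol s' := by
    calc ∑ a, pol' s a * (γ * ∑ s', P s a s' * Vfun P γ R pol s')
        = ∑ a, ∑ s', γ * (pol' s a * P s a s') * Vfun P γ R pol s' := by
          refine Finset.sum_congr rfl fun a _ => ?_
          rw [Finset.mul_sum, Finset.mul_sum]
          exact Finset.sum_congr rfl fun s' _ => by ring
      _ = ∑ s', ∑ a, γ * (pol' s a * P s a s') * Vfun P γ R pol s' := Finset.sum_comm
      _ = γ * ∑ s', transMat P pol' s s' * Vfun P γ R pol s' := by
          rw [Finset.mul_sum]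
          refine Finset.sum_congr rfl fun s' _ => ?_
          simp only [transMat, Finset.sum_mul, Finset.mul_sum]
          exact Finset.sum_congr rfl fun a _ => by ring
  have e : ∀ a, pol' s a * Adv P γ R pol s a =
      pol' s a * R s a + pol' s a * (γ * ∑ s', P s a s' * Vfun P γ R pol s')
        - pol' s a * Vfun P γ R pol s := by
    intro a
    simp only [Adv, Qfun]
    ring
  simp only [e]
  rw [Finset.sum_sub_distrib, Finset.sum_add_distrib, key, ← Finset.sum_mul, h1' s, one_mul]

lemma Vfun_sub (hγ0 : 0 < γ) (hγ1 : γ < 1)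
    (hP0 : ∀ s a s', 0 ≤ P s a s') (hP1 : ∀ s a, ∑ s', P s a s' = 1)
    {pol pol' : S → A → ℝ}
    (h0 : ∀ s a, 0 ≤ pol s a) (h1 : ∀ s, ∑ a, pol s a = 1)
    (h0' : ∀ s a, 0 ≤ pol' s a) (h1' : ∀ s, ∑ a, pol' s a = 1)
    (R : S → A → ℝ) (s : S) :
    Vfun P γ R pol' s - Vfun P γ R pol s =
      ∑ u, Mmat γ (transMat P pol') s u * ∑ a, pol' u a * Adv P γ R pol u a := by
  have hQ' := transMat_stoch hP0 hP1 h0' h1'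
  set M' := Mmat γ (transMat P pol') with hM'
  set V := Vfun P γ R pol with hV
  have hbell : ∀ w, γ * ∑ u, M' s u * transMat P pol' u w
      = M' s w - (if s = w then 1 else 0) := by
    intro w
    rw [hM', Mmat_bellman_right hγ0 hγ1 hQ' s w]
    ring
  symm
  calc ∑ u, M' s u * ∑ a, pol' u a * Adv P γ R pol u a
      = ∑ u, (M' s u * (∑ a, pol' u a * R u a)
          + γ * (M' s u * ∑ w, transMat P pol' u w * V w) - M' s u * V u) := by
        refine Finset.sum_congr rfl fun u _ => ?_
        rw [sumAdv_eq h1' R u]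
        ring
    _ = (∑ u, M' s u * (∑ a, pol' u a * R u a))
          + (∑ u, γ * (M' s u * ∑ w, transMat P pol' u w * V w)) - ∑ u, M' s u * V u := by
        rw [Finset.sum_sub_distrib, Finset.sum_add_distrib]
    _ = Vfun P γ R pol' s + ((∑ w, M' s w * V w) - V s) - ∑ u, M' s u * V u := by
        congr 1
        congr 1
        · exact (Vfun_eq hγ0 hγ1 hP0 hP1 h0' h1' R s).symm
        · calc ∑ u, γ * (M' s u * ∑ w, transMat P pol' u w * V w)
              = ∑ w, (γ * ∑ u, M' s u * transMat P pol' u w) * V w := by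
                simp only [Finset.mul_sum, Finset.sum_mul]
                rw [Finset.sum_comm]
                exact Finset.sum_congr rfl fun w _ => Finset.sum_congr rfl fun u _ => by ring
            _ = ∑ w, (M' s w - (if s = w then 1 else 0)) * V w := by
                simp only [hbell]
            _ = (∑ w, M' s w * V w) - V s := by
                simp only [sub_mul, Finset.sum_sub_distrib, ite_mul, one_mul, zero_mul]
                simp
    _ = Vfun P γ R pol' s - V s := by ring

end Glue

section Glue2
variable {S A : Type*} [Fintype S] [DecidableEq S] [Fintype A]
variable {P : S → A → S → ℝ} {γ : ℝ} {ρ0 : S → ℝ}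

lemma Jret_sub (hγ0 : 0 < γ) (hγ1 : γ < 1)
    (hP0 : ∀ s a s', 0 ≤ P s a s') (hP1 : ∀ s a, ∑ s', P s a s' = 1)
    {pol pol' : S → A → ℝ}
    (h0 : ∀ s a, 0 ≤ pol s a) (h1 : ∀ s, ∑ a, pol s a = 1)
    (h0' : ∀ s a, 0 ≤ pol' s a) (h1' : ∀ s, ∑ a, pol' s a = 1)
    (R : S → A → ℝ) :
    (1 - γ) * (Jret P γ ρ0 R pol' - Jret P γ ρ0 R pol) =
      ∑ u, dVisit P γ ρ0 pol' u * ∑ a, pol' u a * Adv P γ R pol u a := by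
  unfold Jret
  calc (1-γ) * (∑ s, ρ0 s * Vfun P γ R pol' s - ∑ s, ρ0 s * Vfun P γ R pol s)
      = (1-γ) * ∑ s, ρ0 s * (Vfun P γ R pol' s - Vfun P γ R pol s) := by
        rw [← Finset.sum_sub_distrib]
        congr 1
        exact Finset.sum_congr rfl fun s _ => (mul_sub _ _ _).symm
    _ = (1-γ) * ∑ s, ρ0 s * ∑ u, Mmat γ (transMat P pol') s u *
          ∑ a, pol' u a * Adv P γ R pol u a := by
        congr 1
        exact Finset.sum_congr rfl fun s _ => by
          rw [Vfun_sub hγ0 hγ1 hP0 hP1 h0 h1 h0' h1' R s]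
    _ = ∑ u, ((1-γ) * ∑ s, ρ0 s * Mmat γ (transMat P pol') s u) *
          ∑ a, pol' u a * Adv P γ R pol u a := by
        simp only [Finset.mul_sum, Finset.sum_mul]
        rw [Finset.sum_comm]
        refine Finset.sum_congr rfl fun u _ => ?_
        rw [Finset.sum_comm]
        exact Finset.sum_congr rfl fun x _ => Finset.sum_congr rfl fun y _ => by ring
    _ = ∑ u, dVisit P γ ρ0 pol' u * ∑ a, pol' u a * Adv P γ R pol u a := by
        refine Finset.sum_congr rfl fun u _ => ?_
        rw [dVisit_eq hγ0 hγ1 hP0 hP1 h0' h1' u]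

lemma dVisit_sub (hγ0 : 0 < γ) (hγ1 : γ < 1)
    (hP0 : ∀ s a s', 0 ≤ P s a s') (hP1 : ∀ s a, ∑ s', P s a s' = 1)
    {pol pol' : S → A → ℝ}
    (h0 : ∀ s a, 0 ≤ pol s a) (h1 : ∀ s, ∑ a, pol s a = 1)
    (h0' : ∀ s a, 0 ≤ pol' s a) (h1' : ∀ s, ∑ a, pol' s a = 1)
    (u : S) :
    dVisit P γ ρ0 pol' u - dVisit P γ ρ0 pol u =
      γ * ∑ v, dVisit P γ ρ0 pol v *
        ∑ w, (transMat P pol' v w - transMat P pol v w) * Mmat γ (transMat P pol') w u := by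
  have hQ := transMat_stoch hP0 hP1 h0 h1
  have hQ' := transMat_stoch hP0 hP1 h0' h1'
  calc dVisit P γ ρ0 pol' u - dVisit P γ ρ0 pol u
      = (1-γ) * ∑ s0, ρ0 s0 * (Mmat γ (transMat P pol') s0 u - Mmat γ (transMat P pol) s0 u) := by
        rw [dVisit_eq hγ0 hγ1 hP0 hP1 h0' h1' u, dVisit_eq hγ0 hγ1 hP0 hP1 h0 h1 u,
          ← mul_sub, ← Finset.sum_sub_distrib]
        congr 1
        exact Finset.sum_congr rfl fun s0 _ => (mul_sub _ _ _).symm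
    _ = (1-γ) * ∑ s0, ρ0 s0 * ∑ v, ∑ w, Mmat γ (transMat P pol) s0 v *
          (γ * (transMat P pol' v w - transMat P pol v w)) * Mmat γ (transMat P pol') w u := by
        congr 1
        exact Finset.sum_congr rfl fun s0 _ => by rw [Mmat_sub hγ0 hγ1 hQ hQ' s0 u]
    _ = γ * ∑ v, ((1-γ) * ∑ s0, ρ0 s0 * Mmat γ (transMat P pol) s0 v) *
          ∑ w, (transMat P pol' v w - transMat P pol v w) * Mmat γ (transMat P pol') w u := by
        simp only [Finset.mul_sum, Finset.sum_mul]
        rw [Finset.sum_comm]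
        refine Finset.sum_congr rfl fun v _ => ?_
        rw [Finset.sum_comm]
        exact Finset.sum_congr rfl fun x _ => Finset.sum_congr rfl fun y _ => by ring
    _ = γ * ∑ v, dVisit P γ ρ0 pol v *
          ∑ w, (transMat P pol' v w - transMat P pol v w) * Mmat γ (transMat P pol') w u := by
        congr 1
        refine Finset.sum_congr rfl fun v _ => ?_
        rw [dVisit_eq hγ0 hγ1 hP0 hP1 h0 h1 v]

lemma transMat_l1 (hP0 : ∀ s a s', 0 ≤ P s a s') (hP1 : ∀ s a, ∑ s', P s a s' = 1)
    {pol pol' : S → A → ℝ} (v : S) :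
    ∑ w, |transMat P pol' v w - transMat P pol v w| ≤ ∑ a, |pol' v a - pol v a| := by
  have h1 : ∀ w, |transMat P pol' v w - transMat P pol v w| ≤
      ∑ a, |pol' v a - pol v a| * P v a w := by
    intro w
    have e : transMat P pol' v w - transMat P pol v w =
        ∑ a, (pol' v a - pol v a) * P v a w := by
      simp only [transMat, sub_mul, Finset.sum_sub_distrib]
    rw [e]
    refine (Finset.abs_sum_le_sum_abs _ _).trans (le_of_eq ?_)
    exact Finset.sum_congr rfl fun a _ => by
      rw [abs_mul, abs_of_nonneg (hP0 v a w)]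
  calc ∑ w, |transMat P pol' v w - transMat P pol v w|
      ≤ ∑ w, ∑ a, |pol' v a - pol v a| * P v a w :=
        Finset.sum_le_sum fun w _ => h1 w
    _ = ∑ a, |pol' v a - pol v a| * ∑ w, P v a w := by
        rw [Finset.sum_comm]
        exact Finset.sum_congr rfl fun a _ => (Finset.mul_sum _ _ _).symm
    _ = ∑ a, |pol' v a - pol v a| := by
        simp only [hP1, mul_one]

lemma step_bound [Nonempty S] (hγ0 : 0 < γ) (hγ1 : γ < 1)
    (hP0 : ∀ s a s', 0 ≤ P s a s') (hP1 : ∀ s a, ∑ s', P s a s' = 1)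
    (hρ0 : ∀ s, 0 ≤ ρ0 s) (hρ1 : ∑ s, ρ0 s = 1)
    {δ : ℝ} (hδ : 0 < δ) (R : S → A → ℝ)
    {pol pol' : S → A → ℝ}
    (h0 : ∀ s a, 0 ≤ pol s a) (h1 : ∀ s, ∑ a, pol s a = 1)
    (h0' : ∀ s a, 0 ≤ pol' s a) (h1' : ∀ s, ∑ a, pol' s a = 1)
    (habs : ∀ s a, pol s a = 0 → pol' s a = 0)
    (hKL : avgKL P γ ρ0 pol' pol ≤ δ)
    (hA : 0 ≤ surrAdv P γ ρ0 R pol pol') :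
    Jret P γ ρ0 R pol' - Jret P γ ρ0 R pol ≥
      -(Real.sqrt (2 * δ) * γ / (1 - γ) ^ 2) * epsAdv P γ R pol pol' := by
  have h1γ : (0:ℝ) < 1 - γ := by linarith
  have hQ := transMat_stoch hP0 hP1 h0 h1
  have hQ' := transMat_stoch hP0 hP1 h0' h1'
  set d := dVisit P γ ρ0 pol with hd
  set d' := dVisit P γ ρ0 pol' with hd'
  set g := fun u => ∑ a, pol' u a * Adv P γ R pol u a with hg
  set ε := epsAdv P γ R pol pol' with hε
  have hgle : ∀ u, |g u| ≤ ε := fun u =>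
    Finset.le_sup' (fun s => |∑ a, pol' s a * Adv P γ R pol s a|) (Finset.mem_univ u)
  have hε0 : 0 ≤ ε :=
    le_trans (abs_nonneg (g (Classical.arbitrary S))) (hgle (Classical.arbitrary S))
  have hd0 : ∀ v, 0 ≤ d v := fun v => dVisit_nonneg hγ0 hγ1 hP0 hP1 hρ0 h0 h1 v
  have hdsum : ∑ v, d v = 1 := dVisit_sum_one hγ0 hγ1 hP0 hP1 hρ1 h0 h1
  have hKLnn : ∀ v, 0 ≤ klState pol' pol v := fun v =>
    kl_nonneg' (pol' v) (pol v) (h0' v) (h0 v) (h1' v) (h1 v) (habs v)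
  have hTV : ∀ v, ∑ a, |pol' v a - pol v a| ≤ Real.sqrt (2 * klState pol' pol v) := fun v =>
    pinsker_finset' (pol' v) (pol v) (h0' v) (h0 v) (h1' v) (h1 v) (habs v)
  have hCS : ∑ v, d v * Real.sqrt (2 * klState pol' pol v) ≤ Real.sqrt (2 * δ) := by
    calc ∑ v, d v * Real.sqrt (2 * klState pol' pol v)
        = ∑ v, Real.sqrt (d v) * Real.sqrt (d v * (2 * klState pol' pol v)) := by
          refine Finset.sum_congr rfl fun v _ => ?_
          rw [← Real.sqrt_mul (hd0 v), show d v * (d v * (2 * klState pol' pol v)) =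
            d v ^ 2 * (2 * klState pol' pol v) from by ring,
            Real.sqrt_mul (sq_nonneg _), Real.sqrt_sq (hd0 v)]
      _ ≤ Real.sqrt (∑ v, d v) * Real.sqrt (∑ v, d v * (2 * klState pol' pol v)) :=
          Real.sum_sqrt_mul_sqrt_le Finset.univ hd0
            (fun v => mul_nonneg (hd0 v) (by have := hKLnn v; linarith))
      _ ≤ Real.sqrt (2 * δ) := by
          rw [hdsum, Real.sqrt_one, one_mul]
          refine Real.sqrt_le_sqrt ?_
          have e : ∑ v, d v * (2 * klState pol' pol v) = 2 * avgKL P γ ρ0 pol' pol := by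
            rw [avgKL, Finset.mul_sum]
            exact Finset.sum_congr rfl fun v _ => by ring
          rw [e]
          linarith
  have habsd : ∀ u, |d' u - d u| ≤ γ * ∑ v, d v *
      ∑ w, |transMat P pol' v w - transMat P pol v w| * Mmat γ (transMat P pol') w u := by
    intro u
    rw [dVisit_sub hγ0 hγ1 hP0 hP1 h0 h1 h0' h1' u]
    rw [abs_mul, abs_of_pos hγ0]
    refine mul_le_mul_of_nonneg_left ?_ hγ0.le
    refine (Finset.abs_sum_le_sum_abs _ _).trans ?_
    refine Finset.sum_le_sum fun v _ => ?_
    rw [abs_mul, abs_of_nonneg (hd0 v)]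
    refine mul_le_mul_of_nonneg_left ?_ (hd0 v)
    refine (Finset.abs_sum_le_sum_abs _ _).trans ?_
    refine Finset.sum_le_sum fun w _ => ?_
    rw [abs_mul, abs_of_nonneg (Mmat_nonneg hγ0 hγ1 hQ' w u)]
  have htotal : ∑ u, |d' u - d u| ≤ γ * (1 - γ)⁻¹ * Real.sqrt (2 * δ) := by
    calc ∑ u, |d' u - d u|
        ≤ ∑ u, γ * ∑ v, d v *
            ∑ w, |transMat P pol' v w - transMat P pol v w| * Mmat γ (transMat P pol') w u :=
          Finset.sum_le_sum fun u _ => habsd u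
      _ = γ * ∑ v, d v * ((∑ w, |transMat P pol' v w - transMat P pol v w|) * (1-γ)⁻¹) := by
          rw [← Finset.mul_sum, Finset.sum_comm]
          congr 1
          refine Finset.sum_congr rfl fun v _ => ?_
          rw [← Finset.mul_sum, Finset.sum_comm, Finset.sum_mul]
          congr 1
          refine Finset.sum_congr rfl fun w _ => ?_
          rw [← Finset.mul_sum, Mmat_rowsum hγ0 hγ1 hQ' w]
      _ ≤ γ * ∑ v, d v * (Real.sqrt (2 * klState pol' pol v) * (1-γ)⁻¹) := by
          refine mul_le_mul_of_nonneg_left (Finset.sum_le_sum fun v _ => ?_) hγ0.le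
          refine mul_le_mul_of_nonneg_left ?_ (hd0 v)
          refine mul_le_mul_of_nonneg_right ?_ (by positivity)
          exact (transMat_l1 hP0 hP1 v).trans (hTV v)
      _ = γ * (1-γ)⁻¹ * ∑ v, d v * Real.sqrt (2 * klState pol' pol v) := by
          rw [Finset.mul_sum, Finset.mul_sum]
          exact Finset.sum_congr rfl fun v _ => by ring
      _ ≤ γ * (1-γ)⁻¹ * Real.sqrt (2 * δ) := by
          refine mul_le_mul_of_nonneg_left hCS (by positivity)
  have hmain : (1 - γ) * (Jret P γ ρ0 R pol' - Jret P γ ρ0 R pol) ≥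
      -(ε * (γ * (1-γ)⁻¹ * Real.sqrt (2 * δ))) := by
    rw [Jret_sub hγ0 hγ1 hP0 hP1 h0 h1 h0' h1' R]
    have hsplit : ∑ u, d' u * g u = surrAdv P γ ρ0 R pol pol' + ∑ u, (d' u - d u) * g u := by
      rw [surrAdv, ← Finset.sum_add_distrib]
      exact Finset.sum_congr rfl fun u _ => by ring
    have hlow : ∑ u, (d' u - d u) * g u ≥ -(ε * ∑ u, |d' u - d u|) := by
      rw [Finset.mul_sum, ← Finset.sum_neg_distrib]
      refine Finset.sum_le_sum fun u _ => ?_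
      have h1 : |(d' u - d u) * g u| ≤ ε * |d' u - d u| := by
        rw [abs_mul, mul_comm]
        exact mul_le_mul_of_nonneg_right (hgle u) (abs_nonneg _)
      have := neg_abs_le ((d' u - d u) * g u)
      linarith [h1, this]
    have h2 : ε * ∑ u, |d' u - d u| ≤ ε * (γ * (1-γ)⁻¹ * Real.sqrt (2 * δ)) :=
      mul_le_mul_of_nonneg_left htotal hε0
    show ∑ u, d' u * g u ≥ -(ε * (γ * (1-γ)⁻¹ * Real.sqrt (2 * δ)))
    rw [ge_iff_le, hsplit]
    linarith [hlow, h2, hA]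
  have hy : -(Real.sqrt (2 * δ) * γ / (1 - γ) ^ 2) * ε =
      (-(ε * (γ * (1-γ)⁻¹ * Real.sqrt (2 * δ)))) / (1 - γ) := by
    field_simp
  rw [ge_iff_le, hy, div_le_iff₀ h1γ]
  calc -(ε * (γ * (1-γ)⁻¹ * Real.sqrt (2 * δ)))
      ≤ (1 - γ) * (Jret P γ ρ0 R pol' - Jret P γ ρ0 R pol) := hmain
    _ = (Jret P γ ρ0 R pol' - Jret P γ ρ0 R pol) * (1 - γ) := mul_comm _ _

end Glue2

/-- max-reward stage cumulative bound (Lemma A.2). -/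
theorem max_reward_stage_bound {S A : Type*} [Fintype S] [DecidableEq S] [Fintype A] [Nonempty S] [Nonempty A]
    (P : S → A → S → ℝ) (hP0 : ∀ s a s', 0 ≤ P s a s') (hP1 : ∀ s a, ∑ s', P s a s' = 1)
    (γ : ℝ) (hγ0 : 0 < γ) (hγ1 : γ < 1)
    (ρ0 : S → ℝ) (hρ0 : ∀ s, 0 ≤ ρ0 s) (hρ1 : ∑ s, ρ0 s = 1)
    (δ : ℝ) (hδ : 0 < δ) (R : S → A → ℝ) (n : ℕ)
    (pol : ℕ → S → A → ℝ)
    (hpol0 : ∀ i ≤ n, ∀ s a, 0 ≤ pol i s a)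
    (hpol1 : ∀ i ≤ n, ∀ s, ∑ a, pol i s a = 1)
    (habs : ∀ i < n, ∀ s a, pol i s a = 0 → pol (i + 1) s a = 0)
    (hKL : ∀ i < n, avgKL P γ ρ0 (pol (i + 1)) (pol i) ≤ δ)
    (hA : ∀ i < n, 0 ≤ surrAdv P γ ρ0 R (pol i) (pol (i + 1))) :
    Jret P γ ρ0 R (pol n) - Jret P γ ρ0 R (pol 0) ≥
      - (Real.sqrt (2 * δ) * γ / (1 - γ) ^ 2) *
          ∑ j ∈ Finset.range n, epsAdv P γ R (pol j) (pol (j + 1)) := by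

  have key : ∀ m : ℕ, m ≤ n → Jret P γ ρ0 R (pol m) - Jret P γ ρ0 R (pol 0) ≥
      -(Real.sqrt (2*δ) * γ / (1-γ)^2) *
        ∑ j ∈ Finset.range m, epsAdv P γ R (pol j) (pol (j+1)) := by
    intro m
    induction m with
    | zero => intro _; simp
    | succ m ih =>
      intro hm
      have hm' : m ≤ n := by omega
      have hmn : m < n := by omega
      have hstep := step_bound (ρ0 := ρ0) hγ0 hγ1 hP0 hP1 hρ0 hρ1 hδ R
        (hpol0 m hm') (hpol1 m hm') (hpol0 (m+1) hm) (hpol1 (m+1) hm)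
        (habs m hmn) (hKL m hmn) (hA m hmn)
      have hih := ih hm'
      rw [Finset.sum_range_succ]
      have hexp : -(Real.sqrt (2*δ) * γ / (1-γ)^2) *
          ((∑ j ∈ Finset.range m, epsAdv P γ R (pol j) (pol (j+1)))
            + epsAdv P γ R (pol m) (pol (m+1)))
        = -(Real.sqrt (2*δ) * γ / (1-γ)^2) *
            (∑ j ∈ Finset.range m, epsAdv P γ R (pol j) (pol (j+1)))
          + -(Real.sqrt (2*δ) * γ / (1-γ)^2) * epsAdv P γ R (pol m) (pol (m+1)) := by
        ring
      rw [hexp]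
      linarith [hstep, hih]
  exact key n le_rfl
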